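/- Let C = [x_{i_1}=y_1 ∧ … ∧ x_{i_k}=y_k] be any proper k-term with k ≤ M/2. Then Pr_D[C] ≥ (1 − k/M)·Pr_U[C] and Pr_U[C] ≥ (1 − k/M)·Pr_D[C]; consequently (1 − k/M)·M^{−k} ≤ Pr_D[C] ≤ (1 + 2k/M)·M^{−k}. -/

import Mathlib

namespace GLN

noncomputable section

open Finset

/-- `M = 2^m`. -/
def MM (m : ℕ) : ℕ := 2 ^ m

/-- `N = ⌈M · m · ln 2⌉`. -/
def NN (m : ℕ) : ℕ := ⌈(MM m : ℝ) * m * Real.log 2⌉₊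

/-- Strings `X ∈ [M]^N`. -/
abbrev Str (m : ℕ) := Fin (NN m) → Fin (MM m)

/-- The uniform probability mass function on `[M]^N`. -/
def umass (m : ℕ) (_X : Str m) : ℝ := 1 / (MM m : ℝ) ^ NN m

/-- The image `Im(X) ⊆ [M]` of a string, as a finset. -/
def img {m : ℕ} (X : Str m) : Finset (Fin (MM m)) := Finset.image X Finset.univ

/-- Transition kernel of `D_y(X)`: each coordinate with `x_i = y` is replaced by a uniform
independent sample from `[M] \ {y}`; other coordinates are unchanged. -/
def kerDy (m : ℕ) (y : Fin (MM m)) (X Z : Str m) : ℝ :=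
  ∏ i, if X i = y then (if Z i = y then 0 else 1 / ((MM m : ℝ) - 1))
       else (if Z i = X i then 1 else 0)

/-- Transition kernel of `D(X)`: choose `y` uniformly in `[M]`, then apply `D_y`. -/
def kerD (m : ℕ) (X Z : Str m) : ℝ := (1 / (MM m : ℝ)) * ∑ y, kerDy m y X Z

/-- The probability mass function of the distribution `D = D(U)`. -/
def dmass (m : ℕ) (Z : Str m) : ℝ := ∑ X, umass m X * kerD m X Z

/-- Transition kernel of `D_y^inv(Z)`: each coordinate is independently replaced by `y`
with probability `1/M` and left unchanged otherwise. -/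
def kerDinvy (m : ℕ) (y : Fin (MM m)) (Z W : Str m) : ℝ :=
  ∏ i, ((1 / (MM m : ℝ)) * (if W i = y then 1 else 0)
        + (1 - 1 / (MM m : ℝ)) * (if W i = Z i then 1 else 0))

/-- Transition kernel of `D^inv(Z)`: choose `y` uniformly in `[M] \ Im(Z)`,
then apply `D_y^inv`. -/
def kerDinv (m : ℕ) (Z W : Str m) : ℝ :=
  (1 / (((img Z)ᶜ.card : ℝ))) * ∑ y ∈ (img Z)ᶜ, kerDinvy m y Z W

/-- Probability of an event under a mass function. -/
def pr {m : ℕ} (μ : Str m → ℝ) (E : Set (Str m)) : ℝ := ∑ X, E.indicator μ X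

/-- Expectation of a real function under a mass function. -/
def ev {m : ℕ} (μ : Str m → ℝ) (g : Str m → ℝ) : ℝ := ∑ X, μ X * g X

/-- The surjectivity function `f_Surj`. -/
def fSurjB (m : ℕ) (X : Str m) : Bool := decide (img X = Finset.univ)

/-- The `q.2`-th bit of the binary encoding of coordinate `x_{q.1}` of `X`;
this realizes `X` as a string of `n = N·m` bits. -/
def bit {m : ℕ} (X : Str m) (q : Fin (NN m) × Fin m) : Bool :=
  Nat.testBit (X q.1).val q.2.val

-- ### auxiliary lemmas

lemma two_le_M {m : ℕ} (hm : 1 ≤ m) : 2 ≤ MM m := by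
  calc 2 = 2 ^ 1 := rfl
  _ ≤ 2 ^ m := Nat.pow_le_pow_right (by norm_num) hm

lemma pr_eq_sum_filter {m : ℕ} (μ : Str m → ℝ) (C : Set (Str m)) [DecidablePred (· ∈ C)] :
    pr μ C = ∑ X ∈ univ.filter (fun X => X ∈ C), μ X := by
  rw [pr, Finset.sum_filter]
  simp [Set.indicator_apply]

lemma filter_pi_card {m : ℕ} (t : Fin (NN m) → Finset (Fin (MM m))) :
    (univ.filter fun Z : Str m => ∀ i, Z i ∈ t i).card = ∏ i, (t i).card := by
  classical
  rw [← Fintype.card_piFinset]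
  congr 1
  ext Z
  simp [Fintype.mem_piFinset]

lemma prod_card {m k : ℕ} (I : Fin k → Fin (NN m)) (hI : Function.Injective I)
    (c : Fin (NN m) → ℕ) (v : ℕ)
    (h1 : ∀ j, c (I j) = 1) (h2 : ∀ i, i ∉ Finset.image I univ → c i = v) :
    ∏ i, c i = v ^ (NN m - k) := by
  classical
  rw [← Finset.prod_mul_prod_compl (Finset.image I univ) c]
  have e1 : ∏ i ∈ Finset.image I univ, c i = 1 := by
    apply Finset.prod_eq_one
    intro i hi
    obtain ⟨j, _, rfl⟩ := Finset.mem_image.mp hi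
    exact h1 j
  have e2 : ∏ i ∈ (Finset.image I univ)ᶜ, c i = v ^ (NN m - k) := by
    rw [Finset.prod_congr rfl (fun i hi => h2 i (Finset.mem_compl.mp hi)), Finset.prod_const]
    congr 1
    rw [Finset.card_compl, Finset.card_image_of_injective _ hI]
    simp
  rw [e1, e2, one_mul]

lemma cardC {m k : ℕ} (I : Fin k → Fin (NN m)) (hI : Function.Injective I)
    (Y : Fin k → Fin (MM m)) :
    (univ.filter fun Z : Str m => ∀ j, Z (I j) = Y j).card = MM m ^ (NN m - k) := by
  classical
  set t : Fin (NN m) → Finset (Fin (MM m)) :=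
    fun i => univ.filter (fun v => ∀ j, I j = i → v = Y j) with ht
  have hfilter : (univ.filter fun Z : Str m => ∀ j, Z (I j) = Y j)
      = univ.filter (fun Z => ∀ i, Z i ∈ t i) := by
    apply Finset.filter_congr
    intro Z _
    simp only [ht, mem_filter, mem_univ, true_and]
    constructor
    · intro h i j hj; subst hj; exact h j
    · intro h j; exact h (I j) j rfl
  rw [hfilter, filter_pi_card]
  apply prod_card I hI
  · intro j
    have : t (I j) = {Y j} := by
      ext v
      simp only [ht, mem_filter, mem_univ, true_and, mem_singleton]
      constructor
      · intro h; exact h j rfl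
      · intro h j' hj'; subst h; exact congrArg Y (hI hj') ▸ rfl
    rw [this, Finset.card_singleton]
  · intro i hi
    have : t i = univ := by
      ext v
      simp only [ht, mem_filter, mem_univ, true_and, iff_true]
      intro j hj
      exact absurd (Finset.mem_image.mpr ⟨j, mem_univ j, hj⟩) (hj ▸ hi)
    rw [this, Finset.card_univ, Fintype.card_fin]

lemma cardCy {m k : ℕ} (I : Fin k → Fin (NN m)) (hI : Function.Injective I)
    (Y : Fin k → Fin (MM m)) (y : Fin (MM m)) :
    (univ.filter fun Z : Str m => (∀ j, Z (I j) = Y j) ∧ ∀ i, Z i ≠ y).card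
      = if y ∈ Finset.image Y univ then 0 else (MM m - 1) ^ (NN m - k) := by
  classical
  set t : Fin (NN m) → Finset (Fin (MM m)) :=
    fun i => univ.filter (fun v => (∀ j, I j = i → v = Y j) ∧ v ≠ y) with ht
  have hfilter : (univ.filter fun Z : Str m => (∀ j, Z (I j) = Y j) ∧ ∀ i, Z i ≠ y)
      = univ.filter (fun Z => ∀ i, Z i ∈ t i) := by
    apply Finset.filter_congr
    intro Z _
    simp only [ht, mem_filter, mem_univ, true_and]
    constructor
    · rintro ⟨h1, h2⟩ i
      exact ⟨fun j hj => hj ▸ h1 j, h2 i⟩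
    · intro h
      exact ⟨fun j => (h (I j)).1 j rfl, fun i => (h i).2⟩
  rw [hfilter, filter_pi_card]
  by_cases hy : y ∈ Finset.image Y univ
  · rw [if_pos hy]
    obtain ⟨j, _, hj⟩ := Finset.mem_image.mp hy
    apply Finset.prod_eq_zero (Finset.mem_univ (I j))
    have : t (I j) = ∅ := by
      ext v
      simp only [ht, mem_filter, mem_univ, true_and, Finset.notMem_empty, iff_false]
      rintro ⟨h1, h2⟩
      exact h2 ((h1 j rfl).trans hj)
    rw [this, Finset.card_empty]
  · rw [if_neg hy]
    apply prod_card I hI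
    · intro j
      have hYj : Y j ≠ y := fun h => hy (Finset.mem_image.mpr ⟨j, mem_univ j, h⟩)
      have : t (I j) = {Y j} := by
        ext v
        simp only [ht, mem_filter, mem_univ, true_and, mem_singleton]
        constructor
        · rintro ⟨h1, _⟩; exact h1 j rfl
        · rintro rfl
          exact ⟨fun j' hj' => congrArg Y (hI hj') ▸ rfl, hYj⟩
      rw [this, Finset.card_singleton]
    · intro i hi
      have : t i = univ.erase y := by
        ext v
        simp only [ht, mem_filter, mem_univ, true_and, Finset.mem_erase, and_true]
        constructor
        · rintro ⟨_, h2⟩; exact h2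
        · intro h
          refine ⟨fun j hj => absurd (Finset.mem_image.mpr ⟨j, mem_univ j, hj⟩) (hj ▸ hi), h⟩
      rw [this, Finset.card_erase_of_mem (mem_univ y), Finset.card_univ, Fintype.card_fin]

lemma sum_kerDy {m : ℕ} (hm : 1 ≤ m) (y : Fin (MM m)) (Z : Str m) :
    ∑ X : Str m, kerDy m y X Z
      = if y ∈ img Z then 0 else ((MM m : ℝ) / ((MM m : ℝ) - 1)) ^ NN m := by
  classical
  have hM : (2 : ℝ) ≤ (MM m : ℝ) := by exact_mod_cast two_le_M hm
  have hM1 : (MM m : ℝ) - 1 ≠ 0 := by linarith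
  unfold kerDy
  rw [show (Finset.univ : Finset (Str m)) = Fintype.piFinset (fun _ => univ) from
    (Fintype.piFinset_univ).symm,
    ← Finset.prod_univ_sum (fun _ : Fin (NN m) => (univ : Finset (Fin (MM m))))
      (fun i x => if x = y then (if Z i = y then 0 else 1 / ((MM m : ℝ) - 1))
        else (if Z i = x then 1 else 0))]
  have key : ∀ i : Fin (NN m),
      (∑ x : Fin (MM m), if x = y then (if Z i = y then 0 else 1 / ((MM m : ℝ) - 1))
        else (if Z i = x then 1 else 0))
      = if Z i = y then 0 else (MM m : ℝ) / ((MM m : ℝ) - 1) := by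
    intro i
    have split : ∀ x : Fin (MM m),
        (if x = y then (if Z i = y then 0 else 1 / ((MM m : ℝ) - 1))
          else (if Z i = x then 1 else 0))
        = (if x = y then (if Z i = y then 0 else 1 / ((MM m : ℝ) - 1)) else 0)
          + (if x = y then 0 else (if Z i = x then 1 else 0)) := by
      intro x; by_cases h : x = y <;> simp [h]
    rw [Finset.sum_congr rfl (fun x _ => split x), Finset.sum_add_distrib]
    have s1 : (∑ x : Fin (MM m), if x = y then (if Z i = y then 0 else 1 / ((MM m : ℝ) - 1))
        else 0) = if Z i = y then 0 else 1 / ((MM m : ℝ) - 1) := by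
      rw [Finset.sum_ite_eq' univ y (fun _ => if Z i = y then 0 else 1 / ((MM m : ℝ) - 1))]
      simp
    have s2 : (∑ x : Fin (MM m), if x = y then 0 else (if Z i = x then 1 else 0))
        = if Z i = y then (0:ℝ) else 1 := by
      by_cases h : Z i = y
      · rw [if_pos h]
        apply Finset.sum_eq_zero
        intro x _
        by_cases hx : x = y <;> simp [hx, h, Ne.symm]
      · rw [if_neg h]
        rw [Finset.sum_congr rfl (g := fun x => if Z i = x then (1:ℝ) else 0) ?_]
        · rw [Finset.sum_ite_eq univ (Z i) (fun _ => (1:ℝ))]; simp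
        · intro x _
          by_cases hx : x = y
          · subst hx; simp [h]
          · simp [hx]
    rw [s1, s2]
    by_cases h : Z i = y
    · simp [h]
    · rw [if_neg h, if_neg h, if_neg h]
      field_simp
      ring
  rw [Finset.prod_congr rfl (fun i _ => key i)]
  by_cases hy : y ∈ img Z
  · rw [if_pos hy]
    obtain ⟨i, _, hi⟩ := Finset.mem_image.mp hy
    exact Finset.prod_eq_zero (mem_univ i) (by simp [hi])
  · rw [if_neg hy]
    have : ∀ i : Fin (NN m), Z i ≠ y := by
      intro i hi
      exact hy (Finset.mem_image.mpr ⟨i, mem_univ i, hi⟩)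
    rw [Finset.prod_congr rfl (fun i _ => if_neg (this i)), Finset.prod_const]
    simp

lemma dmass_eq {m : ℕ} (hm : 1 ≤ m) (Z : Str m) :
    dmass m Z = (((img Z)ᶜ.card : ℝ)) / ((MM m : ℝ) * ((MM m : ℝ) - 1) ^ NN m) := by
  classical
  have hM : (2 : ℝ) ≤ (MM m : ℝ) := by exact_mod_cast two_le_M hm
  have hM0 : (MM m : ℝ) ≠ 0 := by linarith
  have hM1 : (MM m : ℝ) - 1 ≠ 0 := by linarith
  simp only [dmass, umass, kerD]
  have swap : ∑ X : Str m, (1 / (MM m : ℝ) ^ NN m) * ((1 / (MM m : ℝ)) * ∑ y, kerDy m y X Z)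
      = ∑ y, (1 / (MM m : ℝ) ^ NN m) * (1 / (MM m : ℝ)) * ∑ X : Str m, kerDy m y X Z := by
    calc ∑ X : Str m, (1 / (MM m : ℝ) ^ NN m) * ((1 / (MM m : ℝ)) * ∑ y, kerDy m y X Z)
        = ∑ X : Str m, ∑ y, (1 / (MM m : ℝ) ^ NN m) * (1 / (MM m : ℝ)) * kerDy m y X Z := by
          apply Finset.sum_congr rfl; intro X _
          rw [← mul_assoc, Finset.mul_sum]
      _ = ∑ y, ∑ X : Str m, (1 / (MM m : ℝ) ^ NN m) * (1 / (MM m : ℝ)) * kerDy m y X Z :=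
          Finset.sum_comm
      _ = ∑ y, (1 / (MM m : ℝ) ^ NN m) * (1 / (MM m : ℝ)) * ∑ X : Str m, kerDy m y X Z := by
          apply Finset.sum_congr rfl; intro y _; rw [Finset.mul_sum]
  rw [swap]
  have step2 : ∀ y, (1 / (MM m : ℝ) ^ NN m) * (1 / (MM m : ℝ)) * ∑ X : Str m, kerDy m y X Z
      = (1 / (MM m : ℝ) ^ NN m) * (1 / (MM m : ℝ))
        * (if y ∈ img Z then 0 else ((MM m : ℝ) / ((MM m : ℝ) - 1)) ^ NN m) :=
    fun y => by rw [sum_kerDy hm y Z]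
  rw [Finset.sum_congr rfl (fun y _ => step2 y), ← Finset.mul_sum]
  rw [Finset.sum_ite, Finset.sum_const, Finset.sum_const]
  have hfilt : (univ.filter (fun y => y ∉ img Z)) = (img Z)ᶜ := by
    ext y; simp
  rw [hfilt]
  simp only [smul_zero, zero_add, nsmul_eq_mul]
  rw [div_pow]
  have hMN : ((MM m : ℝ)) ^ NN m ≠ 0 := pow_ne_zero _ hM0
  have hM1N : ((MM m : ℝ) - 1) ^ NN m ≠ 0 := pow_ne_zero _ hM1
  field_simp

lemma pr_umass {m k : ℕ} (hm : 1 ≤ m) (hkN : k ≤ NN m)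
    (I : Fin k → Fin (NN m)) (hI : Function.Injective I) (Y : Fin k → Fin (MM m)) :
    pr (umass m) {X : Str m | ∀ j, X (I j) = Y j} = 1 / (MM m : ℝ) ^ k := by
  classical
  have hM : (2 : ℝ) ≤ (MM m : ℝ) := by exact_mod_cast two_le_M hm
  have hM0 : (MM m : ℝ) ≠ 0 := by linarith
  rw [pr_eq_sum_filter]
  have hfe : (univ.filter fun X : Str m => X ∈ {X : Str m | ∀ j, X (I j) = Y j})
      = univ.filter fun X : Str m => ∀ j, X (I j) = Y j := by
    apply Finset.filter_congr; intro X _; simp [Set.mem_setOf_eq]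
  rw [hfe]
  simp only [umass]
  rw [Finset.sum_const, cardC I hI Y, nsmul_eq_mul]
  have hpow : ((MM m : ℝ)) ^ (NN m - k) * ((MM m : ℝ)) ^ k = (MM m : ℝ) ^ NN m := by
    rw [← pow_add, Nat.sub_add_cancel hkN]
  push_cast
  rw [← hpow]
  have h1 : ((MM m : ℝ)) ^ (NN m - k) ≠ 0 := pow_ne_zero _ hM0
  have h2 : ((MM m : ℝ)) ^ k ≠ 0 := pow_ne_zero _ hM0
  field_simp

lemma pr_dmass {m k : ℕ} (hm : 1 ≤ m) (hkN : k ≤ NN m)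
    (I : Fin k → Fin (NN m)) (hI : Function.Injective I) (Y : Fin k → Fin (MM m)) :
    pr (dmass m) {X : Str m | ∀ j, X (I j) = Y j}
      = ((MM m : ℝ) - ((Finset.image Y univ).card : ℝ))
        / ((MM m : ℝ) * ((MM m : ℝ) - 1) ^ k) := by
  classical
  have hM : (2 : ℝ) ≤ (MM m : ℝ) := by exact_mod_cast two_le_M hm
  have hM0 : (MM m : ℝ) ≠ 0 := by linarith
  have hM1 : (MM m : ℝ) - 1 ≠ 0 := by linarith
  rw [pr_eq_sum_filter]
  have hfe : (univ.filter fun X : Str m => X ∈ {X : Str m | ∀ j, X (I j) = Y j})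
      = univ.filter fun X : Str m => ∀ j, X (I j) = Y j := by
    apply Finset.filter_congr; intro X _; simp [Set.mem_setOf_eq]
  rw [hfe]
  set F := univ.filter fun X : Str m => ∀ j, X (I j) = Y j with hF
  set D : ℝ := (MM m : ℝ) * ((MM m : ℝ) - 1) ^ NN m with hD
  have hDne : D ≠ 0 := mul_ne_zero hM0 (pow_ne_zero _ hM1)
  have hcompl : ∀ Z : Str m, (((img Z)ᶜ.card : ℕ) : ℝ)
      = ∑ y : Fin (MM m), if (∀ i, Z i ≠ y) then (1:ℝ) else 0 := by
    intro Z
    rw [Finset.sum_boole]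
    congr 2
    ext y
    simp [img, eq_comm]
  have hsum : ∑ Z ∈ F, dmass m Z
      = (∑ y : Fin (MM m), ∑ Z ∈ F, if (∀ i, Z i ≠ y) then (1:ℝ) else 0) / D := by
    rw [Finset.sum_congr rfl (fun Z _ => dmass_eq hm Z)]
    rw [← Finset.sum_div]
    congr 1
    rw [Finset.sum_comm]
    exact Finset.sum_congr rfl (fun Z _ => hcompl Z)
  rw [hsum]
  have hinner : ∀ y : Fin (MM m), (∑ Z ∈ F, if (∀ i, Z i ≠ y) then (1:ℝ) else 0)
      = ((if y ∈ Finset.image Y univ then 0 else (MM m - 1) ^ (NN m - k) : ℕ) : ℝ) := by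
    intro y
    rw [Finset.sum_boole, hF, Finset.filter_filter, cardCy I hI Y y]
  rw [Finset.sum_congr rfl (fun y _ => hinner y)]
  have hsplit : (∑ y : Fin (MM m),
      ((if y ∈ Finset.image Y univ then 0 else (MM m - 1) ^ (NN m - k) : ℕ) : ℝ))
      = (((Finset.image Y univ)ᶜ.card : ℝ)) * ((MM m - 1 : ℕ) : ℝ) ^ (NN m - k) := by
    rw [Finset.sum_congr rfl (fun y _ => apply_ite (Nat.cast : ℕ → ℝ) _ _ _)]
    rw [Finset.sum_ite, Finset.sum_const, Finset.sum_const]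
    have : (univ.filter (fun y => y ∉ Finset.image Y univ)) = (Finset.image Y univ)ᶜ := by
      ext y; simp
    rw [this]
    push_cast
    simp [nsmul_eq_mul]
  rw [hsplit]
  have hrM : (Finset.image Y univ).card ≤ MM m := by
    simpa using Finset.card_le_univ (Finset.image Y univ)
  have hcc : (((Finset.image Y univ)ᶜ.card : ℝ))
      = (MM m : ℝ) - ((Finset.image Y univ).card : ℝ) := by
    rw [Finset.card_compl, Fintype.card_fin]
    exact Nat.cast_sub hrM
  have hM1cast : ((MM m - 1 : ℕ) : ℝ) = (MM m : ℝ) - 1 := by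
    have : 1 ≤ MM m := by have := two_le_M hm; omega
    push_cast [Nat.cast_sub this]
    ring
  rw [hcc, hM1cast, hD]
  have hpow : ((MM m : ℝ) - 1) ^ (NN m - k) * ((MM m : ℝ) - 1) ^ k
      = ((MM m : ℝ) - 1) ^ NN m := by
    rw [← pow_add, Nat.sub_add_cancel hkN]
  rw [← hpow]
  have h1 : ((MM m : ℝ) - 1) ^ (NN m - k) ≠ 0 := pow_ne_zero _ hM1
  have h2 : ((MM m : ℝ) - 1) ^ k ≠ 0 := pow_ne_zero _ hM1
  field_simp


/-- for any proper `k`-term `C = [x_{i_1}=y_1 ∧ … ∧ x_{i_k}=y_k]` with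
`k ≤ M/2`: `Pr_D[C] ≥ (1 − k/M)·Pr_U[C]`, `Pr_U[C] ≥ (1 − k/M)·Pr_D[C]`, and consequently
`(1 − k/M)·M^{−k} ≤ Pr_D[C] ≤ (1 + 2k/M)·M^{−k}`. -/
theorem stmt5 (m k : ℕ) (hm : 1 ≤ m) (hk : 2 * k ≤ MM m)
    (I : Fin k → Fin (NN m)) (hI : Function.Injective I) (Y : Fin k → Fin (MM m))
    (C : Set (Str m)) (hC : C = {X : Str m | ∀ j, X (I j) = Y j}) :
    (1 - (k : ℝ) / (MM m : ℝ)) * pr (umass m) C ≤ pr (dmass m) C ∧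
    (1 - (k : ℝ) / (MM m : ℝ)) * pr (dmass m) C ≤ pr (umass m) C ∧
    (1 - (k : ℝ) / (MM m : ℝ)) * (1 / (MM m : ℝ) ^ k) ≤ pr (dmass m) C ∧
    pr (dmass m) C ≤ (1 + 2 * (k : ℝ) / (MM m : ℝ)) * (1 / (MM m : ℝ) ^ k) := by
  classical
  subst hC
  have hkN : k ≤ NN m := by
    simpa using Fintype.card_le_of_injective I hI
  rw [pr_umass hm hkN I hI Y, pr_dmass hm hkN I hI Y]
  have ha2 : (2:ℝ) ≤ (MM m : ℝ) := by exact_mod_cast two_le_M hm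
  have hk2 : 2 * (k:ℝ) ≤ (MM m : ℝ) := by exact_mod_cast hk
  have hrk : ((Finset.image Y univ).card : ℝ) ≤ (k:ℝ) := by
    have h : (Finset.image Y univ).card ≤ k := by
      simpa using Finset.card_image_le (s := univ) (f := Y)
    exact_mod_cast h
  set a : ℝ := (MM m : ℝ) with ha
  set r : ℝ := ((Finset.image Y univ).card : ℝ) with hr
  have ha0 : (0:ℝ) < a := by linarith
  have hr0 : (0:ℝ) ≤ r := by positivity
  set A : ℝ := a ^ k with hA
  set b : ℝ := (a - 1) ^ k with hb
  have hApos : 0 < A := pow_pos ha0 k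
  have hbpos : 0 < b := pow_pos (by linarith) k
  have hba : b ≤ A := pow_le_pow_left₀ (by linarith) (by linarith) k
  -- Bernoulli: (a-k)*A ≤ a*b
  have hbern : (a - (k:ℝ)) * A ≤ a * b := by
    have h1 : (1:ℝ) + (k:ℝ) * (-(1/a)) ≤ (1 + (-(1/a))) ^ k := by
      apply one_add_mul_le_pow
      have h1a : 1/a ≤ 1 := by rw [div_le_one ha0]; linarith
      have h1b : (0:ℝ) < 1/a := by positivity
      linarith
    have h2 : ((1 + (-(1/a))) ^ k) * A = b := by
      rw [hA, hb, ← mul_pow]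
      congr 1
      field_simp <;> ring
    have h3 : ((1:ℝ) + (k:ℝ) * (-(1/a))) * A ≤ ((1 + (-(1/a))) ^ k) * A :=
      mul_le_mul_of_nonneg_right h1 (le_of_lt hApos)
    rw [h2] at h3
    have h4 : ((1:ℝ) + (k:ℝ) * (-(1/a))) * A = (1 - (k:ℝ)/a) * A := by ring_nf
    have h5 : a * ((1 - (k:ℝ)/a) * A) ≤ a * b :=
      mul_le_mul_of_nonneg_left (h4 ▸ h3) (le_of_lt ha0)
    have h6 : a * ((1 - (k:ℝ)/a) * A) = (a - (k:ℝ)) * A := by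
      field_simp <;> ring
    linarith [h6 ▸ h5]
  have hak : (0:ℝ) ≤ a - k := by linarith
  have har : r ≤ a := by linarith
  -- Claim 1
  have c1 : (1 - (k:ℝ)/a) * (1/A) ≤ (a - r) / (a * b) := by
    have l1 : (1 - (k:ℝ)/a) * (1/A) = (a - k) / (a * A) := by
      field_simp <;> ring
    rw [l1, div_le_div_iff₀ (by positivity) (by positivity)]
    have e1 : (a - k) * (a * b) ≤ (a - k) * (a * A) :=
      mul_le_mul_of_nonneg_left (mul_le_mul_of_nonneg_left hba (le_of_lt ha0)) hak
    have e2 : (a - k) * (a * A) ≤ (a - r) * (a * A) :=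
      mul_le_mul_of_nonneg_right (by linarith) (by positivity)
    linarith
  -- Claim 2
  have c2 : (1 - (k:ℝ)/a) * ((a - r) / (a * b)) ≤ 1/A := by
    have l2 : (1 - (k:ℝ)/a) * ((a - r) / (a * b)) = ((a - k) * (a - r)) / (a * (a * b)) := by
      field_simp <;> ring
    rw [l2, div_le_div_iff₀ (by positivity) (by positivity)]
    have e1 : (a - k) * (a - r) * A = (a - r) * ((a - k) * A) := by ring
    have e2 : (a - r) * ((a - k) * A) ≤ a * ((a - k) * A) :=
      mul_le_mul_of_nonneg_right (by linarith) (by positivity)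
    have e3 : a * ((a - k) * A) ≤ a * (a * b) :=
      mul_le_mul_of_nonneg_left hbern (le_of_lt ha0)
    calc (a - k) * (a - r) * A = (a - r) * ((a - k) * A) := e1
      _ ≤ a * ((a - k) * A) := e2
      _ ≤ a * (a * b) := e3
      _ = 1 * (a * (a * b)) := by ring
  -- Claim 4
  have hP0 : (0:ℝ) ≤ (a - r) / (a * b) := div_nonneg (by linarith) (by positivity)
  have c4 : (a - r) / (a * b) ≤ (1 + 2 * (k:ℝ)/a) * (1/A) := by
    set P : ℝ := (a - r) / (a * b) with hP
    set t : ℝ := (k:ℝ)/a with hT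
    have ht0 : 0 ≤ t := by positivity
    have ht2 : 2 * t ≤ 1 := by
      have e : 2 * t = (2*(k:ℝ))/a := by rw [hT]; ring
      rw [e, div_le_one ha0]
      linarith
    have hmul : (1 + 2*t) * ((1 - t) * P) ≤ (1 + 2*t) * (1/A) :=
      mul_le_mul_of_nonneg_left c2 (by linarith)
    have hre : (1 + 2 * (k:ℝ)/a) = 1 + 2*t := by rw [hT]; ring
    rw [hre]
    have hid : (1 + 2*t) * ((1 - t) * P) = P + P*(t*(1-2*t)) := by ring
    have hnn : 0 ≤ P*(t*(1-2*t)) := mul_nonneg hP0 (mul_nonneg ht0 (by linarith))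
    linarith
  exact ⟨c1, c2, c1, c4⟩

end
end GLN
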